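/- arXiv:1805.09211 — 2 statements merged into one kernel-verified Lean document; each statement's English description precedes it below -/
import Mathlib

section
/- Let d ≥ 4 be even and let i₀ be an integer with 1 ≤ i₀ ≤ d−2. Then there is no unit vector α ∈ ℂ^d such that ⟨α, X^{d/2} Z^i α⟩ = 0 for all i = 0, 1, …, d/2 and ⟨α, Z^i α⟩ = 0 for all integers i with i₀ ≤ i ≤ i₀ + d/2 − 1. (Equivalently: any set S of generalized Bell states whose pairwise difference set ΔU contains {(d/2, i)}_{i=0}^{d/2} ∪ {(0, i)}_{i=i₀}^{i₀+d/2−1} is 1-LOCC indistinguishable.) -/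
open Complex

/-- `ω d = exp(2πi/d)`, the primitive `d`-th root of unity in `ℂ`. -/
noncomputable def ω (d : ℕ) : ℂ := Complex.exp (2 * Real.pi * Complex.I / d)

/-- The generalized Pauli operator `U_{m,n} = X^m Z^n` acting on `ℂ^d`
(coordinates indexed by `ZMod d`), where `X e_j = e_{j+1}` and `Z e_j = ω^j e_j`:
`(U_{m,n} α)_k = ω^{n (k-m)} α_{k-m}`. -/
noncomputable def pU (d : ℕ) [NeZero d] (m n : ZMod d) (α : ZMod d → ℂ) : ZMod d → ℂ :=
  fun k => ω d ^ (n.val * (k - m).val) * α (k - m)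

/-- The standard Hermitian inner product on `ℂ^d`. -/
noncomputable def ip (d : ℕ) [NeZero d] (α β : ZMod d → ℂ) : ℂ :=
  ∑ j : ZMod d, (starRingEnd ℂ) (α j) * β j

section Aux

open Finset Polynomial

variable (d : ℕ) [NeZero d]

lemma omega_prim : IsPrimitiveRoot (ω d) d :=
  Complex.isPrimitiveRoot_exp d (NeZero.ne d)

lemma omega_pow_d : ω d ^ d = 1 := (omega_prim d).pow_eq_one

lemma omega_ne_zero : ω d ≠ 0 := Complex.exp_ne_zero _

lemma omega_abs : ‖ω d‖ = 1 := by
  have h : (2 * (Real.pi : ℂ) * Complex.I / d) = ((2 * Real.pi / d : ℝ) : ℂ) * Complex.I := by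
    push_cast; ring
  rw [ω, h, Complex.norm_exp_ofReal_mul_I]

lemma omega_pow_mod (x : ℕ) : ω d ^ x = ω d ^ (x % d) := by
  conv_lhs => rw [← Nat.mod_add_div x d]
  rw [pow_add, pow_mul, omega_pow_d, one_pow, mul_one]

lemma omega_pow_congr {x y : ℕ} (h : (x : ZMod d) = (y : ZMod d)) :
    ω d ^ x = ω d ^ y := by
  have h' : x % d = y % d := (ZMod.natCast_eq_natCast_iff x y d).mp h
  rw [omega_pow_mod d x, omega_pow_mod d y, h']

/-- `ee d a = ω^a` for `a : ZMod d`, well defined. -/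
noncomputable def ee (a : ZMod d) : ℂ := ω d ^ a.val

lemma val_cast (a : ZMod d) : ((a.val : ℕ) : ZMod d) = a :=
  ZMod.natCast_rightInverse a

lemma ee_natCast (x : ℕ) : ee d (x : ZMod d) = ω d ^ x :=
  omega_pow_congr d (val_cast d _)

lemma ee_add (a b : ZMod d) : ee d (a + b) = ee d a * ee d b := by
  rw [ee, ee, ee, ← pow_add]
  exact omega_pow_congr d (by rw [val_cast, Nat.cast_add, val_cast, val_cast])

lemma ee_zero : ee d 0 = 1 := by
  rw [ee, ZMod.val_zero, pow_zero]

lemma ee_mul_natCast (t : ℕ) (j : ZMod d) : ee d ((t : ZMod d) * j) = (ee d j) ^ t := by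
  rw [ee, ee, ← pow_mul]
  exact omega_pow_congr d
    (by rw [val_cast, Nat.cast_mul, val_cast]; ring)

lemma ee_val_mul (n j : ZMod d) : ω d ^ (n.val * j.val) = ee d (n * j) := by
  rw [ee]
  exact omega_pow_congr d
    (by rw [Nat.cast_mul, val_cast, val_cast, val_cast])

lemma ee_ne_zero (a : ZMod d) : ee d a ≠ 0 := pow_ne_zero _ (omega_ne_zero d)

lemma ee_conj (a : ZMod d) : (starRingEnd ℂ) (ee d a) = ee d (-a) := by
  have h1 : ee d a * ee d (-a) = 1 := by
    rw [← ee_add, add_neg_cancel, ee_zero]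
  have h2 : (starRingEnd ℂ) (ee d a) * ee d a = 1 := by
    rw [mul_comm, Complex.mul_conj]
    norm_cast
    rw [Complex.normSq_eq_norm_sq, ee, norm_pow, omega_abs, one_pow]
    norm_num
  calc (starRingEnd ℂ) (ee d a) = (starRingEnd ℂ) (ee d a) * (ee d a * ee d (-a)) := by
        rw [h1, mul_one]
    _ = ((starRingEnd ℂ) (ee d a) * ee d a) * ee d (-a) := by ring
    _ = ee d (-a) := by rw [h2, one_mul]

lemma ee_inj : Function.Injective (ee d) := by
  intro a b h
  have := (omega_prim d).pow_inj (ZMod.val_lt a) (ZMod.val_lt b) h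
  exact ZMod.val_injective d this

lemma sum_val_pow (x : ℂ) : ∑ a : ZMod d, x ^ a.val = ∑ i ∈ Finset.range d, x ^ i := by
  refine Finset.sum_nbij' (i := fun a => a.val) (j := fun i => (i : ZMod d)) ?_ ?_ ?_ ?_ ?_
  · intro a _; exact Finset.mem_range.mpr (ZMod.val_lt a)
  · intro i _; exact Finset.mem_univ _
  · intro a _; exact val_cast d a
  · intro i hi; exact ZMod.val_cast_of_lt (Finset.mem_range.mp hi)
  · intro a _; rfl

lemma sum_ee (c : ZMod d) : ∑ a : ZMod d, ee d (a * c) = if c = 0 then (d : ℂ) else 0 := by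
  have key : ∀ a : ZMod d, ee d (a * c) = (ee d c) ^ a.val := by
    intro a
    conv_lhs => rw [← val_cast d a]
    exact ee_mul_natCast d a.val c
  split_ifs with hc
  · subst hc
    simp only [mul_zero, ee_zero]
    rw [Finset.sum_const, Finset.card_univ, ZMod.card, nsmul_eq_mul, mul_one]
  · have hx : ee d c ≠ 1 := by
      intro h
      exact hc (ee_inj d (h.trans (ee_zero d).symm))
    have hxd : (ee d c) ^ d = 1 := by
      rw [ee, ← pow_mul, mul_comm, pow_mul, omega_pow_d, one_pow]
    calc ∑ a : ZMod d, ee d (a * c) = ∑ i ∈ Finset.range d, (ee d c) ^ i := by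
          simp only [key]; exact sum_val_pow d _
      _ = ((ee d c) ^ d - 1) / (ee d c - 1) := geom_sum_eq hx d
      _ = 0 := by rw [hxd, sub_self, zero_div]

/-- `ip α (pU m n α)` as a Fourier coefficient. -/
lemma ip_pU (α : ZMod d → ℂ) (m n : ZMod d) :
    ip d α (pU d m n α) = ∑ j : ZMod d, (starRingEnd ℂ) (α (j + m)) * α j * ee d (n * j) := by
  rw [ip]
  refine Fintype.sum_equiv (Equiv.subRight m) _ _ ?_
  intro x
  simp only [Equiv.subRight_apply, pU, sub_add_cancel]
  rw [ee_val_mul]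
  ring

end Aux

/-- (Lemma 4 of the paper, general window.) For even `d ≥ 4` and an integer
`i₀` with `1 ≤ i₀ ≤ d-2`, there is no unit vector `α ∈ ℂ^d` with
`⟨α, X^{d/2} Z^i α⟩ = 0` for all `i = 0,…,d/2` and `⟨α, Z^i α⟩ = 0` for all
`i₀ ≤ i ≤ i₀ + d/2 - 1`; i.e. any set of GBSs whose difference set contains
`{(d/2,i)}_{i=0}^{d/2} ∪ {(0,i)}_{i=i₀}^{i₀+d/2-1}` is 1-LOCC indistinguishable. -/
theorem stmt_13 (d : ℕ) [NeZero d] (hd : 4 ≤ d) (heven : Even d)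
    (i₀ : ℤ) (hi₀ : 1 ≤ i₀) (hi₀' : i₀ ≤ (d : ℤ) - 2) :
    ¬ ∃ α : ZMod d → ℂ, ip d α α = 1 ∧
      (∀ i : ℕ, i ≤ d / 2 →
        ip d α (pU d ((d / 2 : ℕ) : ZMod d) (i : ZMod d) α) = 0) ∧
      (∀ i : ℤ, i₀ ≤ i → i ≤ i₀ + ((d / 2 : ℕ) : ℤ) - 1 →
        ip d α (pU d 0 (i : ZMod d) α) = 0) := by
  classical
  rintro ⟨α, hnorm, hX, hZ⟩
  set h : ℕ := d / 2 with hh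
  have hd2 : 2 * h = d := Nat.two_mul_div_two_of_even heven
  have hhpos : 0 < h := by omega
  set H : ZMod d := ((h : ℕ) : ZMod d) with hH
  have hHH : H + H = 0 := by
    rw [hH, ← Nat.cast_add]
    have : h + h = d := by omega
    rw [this, ZMod.natCast_self]
  -- Fourier coefficients
  set F : ZMod d → ZMod d → ℂ :=
    fun m n => ∑ j : ZMod d, (starRingEnd ℂ) (α (j + m)) * α j * ee d (n * j) with hF
  have hXF : ∀ i : ℕ, i ≤ h → F H (i : ZMod d) = 0 := by
    intro i hi
    have h1 := hX i hi
    rw [ip_pU] at h1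
    rw [hF]
    exact h1
  have hZF : ∀ t : ℕ, t < h → F 0 (((i₀ : ℤ) : ZMod d) + (t : ZMod d)) = 0 := by
    intro t ht
    have h1 : ip d α (pU d 0 ((i₀ + t : ℤ) : ZMod d) α) = 0 := by
      apply hZ (i₀ + t) (by omega)
      have : ((d / 2 : ℕ) : ℤ) = (h : ℤ) := by norm_cast
      omega
    rw [ip_pU] at h1
    have h2 : ((i₀ + t : ℤ) : ZMod d) = ((i₀ : ℤ) : ZMod d) + (t : ZMod d) := by
      push_cast; ring
    rw [hF, ← h2]
    exact h1
  -- Step A: F H n = 0 for all n, by symmetry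
  have hsymm : ∀ n : ZMod d, F H n = 0 → F H (-n) = 0 := by
    intro n hn
    have key : ee d (-(n * H)) * (starRingEnd ℂ) (F H n) = F H (-n) := by
      simp only [hF, map_sum, map_mul, Complex.conj_conj, ee_conj, Finset.mul_sum]
      refine Fintype.sum_equiv (Equiv.addRight H) _ _ ?_
      intro x
      simp only [Equiv.coe_addRight]
      rw [add_assoc, hHH, add_zero]
      rw [show -n * (x + H) = -(n * x) + -(n * H) by ring, ee_add]
      ring
    rw [← key, hn, map_zero, mul_zero]
  have hFHall : ∀ n : ZMod d, F H n = 0 := by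
    intro n
    by_cases hc : n.val ≤ h
    · have : n = ((n.val : ℕ) : ZMod d) := (val_cast d n).symm
      rw [this]; exact hXF n.val hc
    · push_neg at hc
      have hv : n.val < d := ZMod.val_lt n
      set t : ℕ := d - n.val with htdef
      have ht : t ≤ h := by omega
      have hnt : n = -((t : ℕ) : ZMod d) := by
        have : ((t : ℕ) : ZMod d) + n = 0 := by
          rw [← val_cast d n, ← Nat.cast_add]
          have : t + n.val = d := by omega
          rw [this, ZMod.natCast_self]
        exact eq_neg_of_add_eq_zero_right this
      rw [hnt]
      exact hsymm _ (hXF t ht)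
  -- inverse DFT: pairs vanish
  have hq : ∀ j : ZMod d, (starRingEnd ℂ) (α (j + H)) * α j = 0 := by
    intro j'
    have calc1 : ∑ n : ZMod d, ee d (-(n * j')) * F H n
        = (d : ℂ) * ((starRingEnd ℂ) (α (j' + H)) * α j') := by
      rw [hF]
      calc ∑ n : ZMod d, ee d (-(n * j')) *
            ∑ j : ZMod d, (starRingEnd ℂ) (α (j + H)) * α j * ee d (n * j)
          = ∑ j : ZMod d, (starRingEnd ℂ) (α (j + H)) * α j *
              ∑ n : ZMod d, ee d (n * (j - j')) := by
            simp_rw [Finset.mul_sum]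
            rw [Finset.sum_comm]
            refine Finset.sum_congr rfl fun j _ => Finset.sum_congr rfl fun n _ => ?_
            rw [show n * (j - j') = -(n * j') + n * j by ring, ee_add]
            ring
        _ = ∑ j : ZMod d, (starRingEnd ℂ) (α (j + H)) * α j *
              (if j - j' = 0 then (d : ℂ) else 0) := by
            congr 1; ext j; rw [sum_ee]
        _ = (d : ℂ) * ((starRingEnd ℂ) (α (j' + H)) * α j') := by
            have key : ∀ j : ZMod d, (starRingEnd ℂ) (α (j + H)) * α j *
                (if j - j' = 0 then (d : ℂ) else 0) =
                if j = j' then (starRingEnd ℂ) (α (j + H)) * α j * (d : ℂ) else 0 := by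
              intro j
              by_cases hj : j = j'
              · simp [hj]
              · have hne : j - j' ≠ 0 := sub_ne_zero.mpr hj
                simp [hj, hne]
            simp_rw [key]
            rw [Finset.sum_ite_eq' Finset.univ j'
              (fun j => (starRingEnd ℂ) (α (j + H)) * α j * (d : ℂ))]
            simp [mul_comm]
    have calc2 : ∑ n : ZMod d, ee d (-(n * j')) * F H n = 0 := by
      refine Finset.sum_eq_zero fun n _ => ?_
      rw [hFHall n, mul_zero]
    rw [calc2] at calc1
    have hdne : (d : ℂ) ≠ 0 := by
      exact_mod_cast Nat.cast_ne_zero.mpr (NeZero.ne d)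
    exact (mul_eq_zero.mp calc1.symm).resolve_left hdne
  -- Step B: support has size ≤ h
  set S : Finset (ZMod d) := Finset.univ.filter (fun j => α j ≠ 0) with hS
  have hSmem : ∀ j, j ∈ S ↔ α j ≠ 0 := by
    intro j; rw [hS, Finset.mem_filter]; simp
  have hdisj : ∀ j ∈ S, j + H ∉ S := by
    intro j hj hjH
    have h1 := hq j
    rcases mul_eq_zero.mp h1 with h2 | h2
    · exact (hSmem (j + H)).mp hjH (by simpa using h2)
    · exact (hSmem j).mp hj h2
  have hScard : S.card ≤ h := by
    have hinj : Function.Injective (fun j : ZMod d => j + H) :=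
      fun a b hab => by simpa using hab
    have hcardim : (S.image (fun j => j + H)).card = S.card :=
      Finset.card_image_of_injective S hinj
    have hdisj2 : Disjoint S (S.image (fun j => j + H)) := by
      rw [Finset.disjoint_right]
      intro x hx hxS
      obtain ⟨j, hj, rfl⟩ := Finset.mem_image.mp hx
      exact hdisj j hj hxS
    have := Finset.card_union_of_disjoint hdisj2
    have hle : (S ∪ S.image (fun j => j + H)).card ≤ d := by
      calc (S ∪ S.image (fun j => j + H)).card ≤ Finset.univ.card :=
            Finset.card_le_card (Finset.subset_univ _)
        _ = d := by rw [Finset.card_univ, ZMod.card]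
      
    omega
  -- the coefficients
  set I₀ : ZMod d := ((i₀ : ℤ) : ZMod d) with hI₀
  set c : ZMod d → ℂ := fun j => (starRingEnd ℂ) (α j) * α j * ee d (I₀ * j) with hc
  have hsys : ∀ t : ℕ, t < h → ∑ j ∈ S, c j * (ee d j) ^ t = 0 := by
    intro t ht
    have h1 := hZF t ht
    rw [hF] at h1
    calc ∑ j ∈ S, c j * (ee d j) ^ t
        = ∑ j ∈ S, (starRingEnd ℂ) (α (j + 0)) * α j * ee d ((I₀ + (t : ZMod d)) * j) := by
          refine Finset.sum_congr rfl fun j _ => ?_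
          rw [add_zero, hc]
          have : (I₀ + (t : ZMod d)) * j = I₀ * j + (t : ZMod d) * j := by ring
          rw [this, ee_add, ee_mul_natCast]
          ring
      _ = ∑ j : ZMod d, (starRingEnd ℂ) (α (j + 0)) * α j * ee d ((I₀ + (t : ZMod d)) * j) := by
          refine Finset.sum_subset (Finset.subset_univ S) fun j _ hj => ?_
          have : α j = 0 := by
            by_contra hne
            exact hj ((hSmem j).mpr hne)
          rw [this]; ring
      _ = 0 := h1
  -- Vandermonde / Lagrange step: S = ∅
  have hSempty : S = ∅ := by
    by_contra hne
    obtain ⟨m, hm⟩ := Finset.nonempty_iff_ne_empty.mpr hne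
    set P : Polynomial ℂ := ∏ j ∈ S.erase m, (Polynomial.X - Polynomial.C (ee d j)) with hP
    have hPdeg : P.natDegree ≤ h - 1 := by
      rw [hP]
      calc (∏ j ∈ S.erase m, (Polynomial.X - Polynomial.C (ee d j))).natDegree
          ≤ ∑ j ∈ S.erase m, (Polynomial.X - Polynomial.C (ee d j)).natDegree :=
            Polynomial.natDegree_prod_le _ _
        _ ≤ ∑ _j ∈ S.erase m, 1 :=
            Finset.sum_le_sum (f := fun j => (Polynomial.X - Polynomial.C (ee d j)).natDegree)
              (g := fun _ => 1) fun j _ => Polynomial.natDegree_X_sub_C_le (ee d j)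
        _ = (S.erase m).card := by rw [Finset.sum_const, smul_eq_mul, mul_one]
        _ = S.card - 1 := by rw [Finset.card_erase_of_mem hm]
        _ ≤ h - 1 := by omega
    have hsum0 : ∑ j ∈ S, c j * P.eval (ee d j) = 0 := by
      have heval : ∀ x : ℂ, P.eval x =
          ∑ t ∈ Finset.range (P.natDegree + 1), P.coeff t * x ^ t := by
        intro x
        rw [Polynomial.eval_eq_sum_range]
      calc ∑ j ∈ S, c j * P.eval (ee d j)
          = ∑ t ∈ Finset.range (P.natDegree + 1), P.coeff t * ∑ j ∈ S, c j * (ee d j) ^ t := by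
            simp_rw [heval, Finset.mul_sum]
            rw [Finset.sum_comm]
            refine Finset.sum_congr rfl fun t _ => Finset.sum_congr rfl fun j _ => ?_
            ring
        _ = 0 := by
            refine Finset.sum_eq_zero fun t ht => ?_
            rw [hsys t (by
              have := Finset.mem_range.mp ht
              omega), mul_zero]
    have hsum1 : ∑ j ∈ S, c j * P.eval (ee d j) = c m * P.eval (ee d m) := by
      rw [← Finset.add_sum_erase S _ hm]
      have : ∑ j ∈ S.erase m, c j * P.eval (ee d j) = 0 := by
        refine Finset.sum_eq_zero fun j hj => ?_
        have : P.eval (ee d j) = 0 := by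
          rw [hP, Polynomial.eval_prod]
          refine Finset.prod_eq_zero hj ?_
          simp
        rw [this, mul_zero]
      rw [this, add_zero]
    have hPm : P.eval (ee d m) ≠ 0 := by
      rw [hP, Polynomial.eval_prod]
      refine Finset.prod_ne_zero_iff.mpr fun j hj => ?_
      simp only [Polynomial.eval_sub, Polynomial.eval_X, Polynomial.eval_C]
      intro heq
      have : m = j := ee_inj d (sub_eq_zero.mp heq)
      exact (Finset.ne_of_mem_erase hj) this.symm
    have hcm : c m ≠ 0 := by
      rw [hc]
      have hαm : α m ≠ 0 := (hSmem m).mp hm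
      exact mul_ne_zero (mul_ne_zero (by simpa using hαm) hαm) (ee_ne_zero d _)
    rw [hsum0] at hsum1
    exact hcm (by
      rcases mul_eq_zero.mp hsum1.symm with h | h
      · exact h
      · exact absurd h hPm)
  -- conclude
  have : ip d α α = 0 := by
    rw [ip]
    refine Finset.sum_eq_zero fun j _ => ?_
    have : α j = 0 := by
      by_contra hne
      have : j ∈ S := (hSmem j).mpr hne
      rw [hSempty] at this
      exact absurd this (Finset.notMem_empty j)
    rw [this, mul_zero]
  rw [this] at hnorm
  exact zero_ne_one hnorm
end

section
/- Let d = 4m + 2 for a positive integer m, and let S = {(0, 2i−1) : i = 1, …, ⌈d/4⌉} ∪ {(0,0), (d/2, 0), (d/2, d/2)} ⊆ ℤ/dℤ × ℤ/dℤ, a set of 3 + ⌈d/4⌉ pairs. Then there is no unit vector α ∈ ℂ^d such that the vectors X^a Z^b α for (a,b) ∈ S are pairwise orthogonal; that is, this set of 3 + ⌈d/4⌉ generalized Bell states in d⊗d is 1-LOCC indistinguishable, and hence f_GBS(d) ≤ 3 + ⌈d/4⌉. -/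
open Complex

section helpers
variable {d : ℕ} [NeZero d]

lemma valcast (v : ZMod d) : ((v.val : ℕ) : ZMod d) = v := ZMod.natCast_rightInverse v

lemma zpow_congr {ζ : ℂ} (hζ0 : ζ ≠ 0) (hζd : ζ ^ d = 1) {x y : ℤ}
    (h : ((x : ZMod d)) = (y : ZMod d)) : ζ ^ x = ζ ^ y := by
  obtain ⟨t, ht⟩ : (d : ℤ) ∣ x - y := by
    rw [← ZMod.intCast_zmod_eq_zero_iff_dvd]; push_cast; rw [h]; ring
  have hx : x = y + d * t := by linarith
  rw [hx, zpow_add₀ hζ0, zpow_mul, zpow_natCast, hζd, one_zpow, mul_one]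

lemma sum_exp_congr {ζ : ℂ} (hζ0 : ζ ≠ 0) (hζd : ζ ^ d = 1) (f : ZMod d → ℂ)
    (e e' : ZMod d → ℤ) (h : ∀ k, ((e k : ℤ) : ZMod d) = ((e' k : ℤ) : ZMod d)) :
    ∑ k : ZMod d, ζ ^ (e k) * f k = ∑ k : ZMod d, ζ ^ (e' k) * f k :=
  Finset.sum_congr rfl fun k _ => by rw [zpow_congr hζ0 hζd (h k)]

lemma sum_shift {ζ : ℂ} (hζ0 : ζ ≠ 0) (f : ZMod d → ℂ) (e : ZMod d → ℤ) (C : ℤ)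
    (h : ∑ k : ZMod d, ζ ^ (e k + C) * f k = 0) : ∑ k : ZMod d, ζ ^ (e k) * f k = 0 := by
  have heq : ∑ k : ZMod d, ζ ^ (e k + C) * f k = ζ ^ C * ∑ k : ZMod d, ζ ^ (e k) * f k := by
    rw [Finset.mul_sum]
    refine Finset.sum_congr rfl fun k _ => ?_
    rw [zpow_add₀ hζ0]; ring
  rw [heq] at h
  exact (mul_eq_zero.mp h).resolve_left (zpow_ne_zero _ hζ0)

lemma sum_zpow_mul {ζ : ℂ} (hζ : IsPrimitiveRoot ζ d) (x : ℤ) :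
    ∑ j ∈ Finset.range d, ζ ^ (x * j) = if ((x : ZMod d)) = 0 then (d : ℂ) else 0 := by
  have hd0 : d ≠ 0 := NeZero.ne d
  have hζ0 : ζ ≠ 0 := hζ.ne_zero hd0
  have hζd : ζ ^ d = 1 := hζ.pow_eq_one
  have hpow : ∀ j : ℕ, ζ ^ (x * j) = (ζ ^ x) ^ j := fun j => by
    rw [zpow_mul, zpow_natCast]
  split_ifs with h
  · have h1 : ζ ^ x = 1 := by
      have := zpow_congr hζ0 hζd (x := x) (y := 0) (by simpa using h)
      simpa using this
    simp [hpow, h1]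
  · have h1 : ζ ^ x ≠ 1 := by
      intro hc
      set r : ℕ := (x % d).toNat with hr
      have hnn : (0:ℤ) ≤ x % d := Int.emod_nonneg x (Int.natCast_ne_zero.mpr hd0)
      have hrx : ((r : ℕ) : ℤ) = x % d := Int.toNat_of_nonneg hnn
      have hxr : ((x : ℤ) : ZMod d) = (((r : ℕ) : ℤ) : ZMod d) := by
        rw [hrx, ZMod.intCast_eq_intCast_iff]
        exact (Int.emod_emod_of_dvd x dvd_rfl).symm
      have hrne : r ≠ 0 := by
        intro h0
        apply h
        rw [hxr, h0]; simp
      have hrlt : r < d := by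
        have := Int.emod_lt_of_pos x (show (0:ℤ) < d by exact_mod_cast Nat.pos_of_ne_zero hd0)
        omega
      have hone : ζ ^ ((r : ℕ) : ℤ) = 1 := by
        rw [← zpow_congr hζ0 hζd hxr]; exact hc
      rw [zpow_natCast] at hone
      exact hζ.pow_ne_one_of_pos_of_lt hrne hrlt hone
    have hxd : (ζ ^ x) ^ d = 1 := by
      have hx : ζ ^ (x * d) = 1 := by
        have := zpow_congr hζ0 hζd (x := x * d) (y := 0) (by push_cast; simp [ZMod.natCast_self])
        simpa using this
      rw [zpow_mul, zpow_natCast] at hx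
      exact hx
    simp only [hpow]
    rw [geom_sum_eq h1, hxd, sub_self, zero_div]

lemma fourier_inv {ζ : ℂ} (hζ : IsPrimitiveRoot ζ d) (f : ZMod d → ℂ) (k0 : ZMod d) :
    ∑ j ∈ Finset.range d, (∑ k : ZMod d, ζ ^ ((j : ℤ) * k.val) * f k) * ζ ^ (-(j : ℤ) * (k0.val : ℤ))
      = d * f k0 := by
  have hd0 : d ≠ 0 := NeZero.ne d
  have hζ0 : ζ ≠ 0 := hζ.ne_zero hd0
  have step : ∀ j ∈ Finset.range d,
      (∑ k : ZMod d, ζ ^ ((j : ℤ) * k.val) * f k) * ζ ^ (-(j : ℤ) * (k0.val : ℤ))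
      = ∑ k : ZMod d, ζ ^ (((k.val : ℤ) - (k0.val : ℤ)) * j) * f k := by
    intro j _
    rw [Finset.sum_mul]
    refine Finset.sum_congr rfl fun k _ => ?_
    rw [mul_right_comm, ← zpow_add₀ hζ0]
    ring_nf
  rw [Finset.sum_congr rfl step, Finset.sum_comm]
  have inner : ∀ k : ZMod d,
      ∑ j ∈ Finset.range d, ζ ^ (((k.val : ℤ) - (k0.val : ℤ)) * j) * f k
      = (if k = k0 then (d : ℂ) else 0) * f k := by
    intro k
    rw [← Finset.sum_mul, sum_zpow_mul hζ]
    congr 1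
    have hiff : ((((k.val : ℤ) - (k0.val : ℤ)) : ℤ) : ZMod d) = 0 ↔ k = k0 := by
      push_cast
      rw [valcast, valcast, sub_eq_zero]
    simp only [hiff]
  rw [Finset.sum_congr rfl fun k _ => inner k]
  simp [Finset.sum_ite_eq', mul_comm]

end helpers

lemma main_contra (m : ℕ) (hm : 1 ≤ m) (d : ℕ) [NeZero d] (hd : d = 4 * m + 2)
    (α : ZMod d → ℂ) (h1 : ip d α α = 1)
    (horth : ∀ p ∈ ((Finset.Icc 1 (m+1)).image
              (fun i : ℕ => ((0 : ZMod d), ((2 * i - 1 : ℕ) : ZMod d))) ∪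
            ({((0 : ZMod d), (0 : ZMod d)),
              ((((d / 2 : ℕ) : ZMod d)), (0 : ZMod d)),
              ((((d / 2 : ℕ) : ZMod d)), (((d / 2 : ℕ) : ZMod d)))} :
              Finset (ZMod d × ZMod d))),
        ∀ q ∈ ((Finset.Icc 1 (m+1)).image
              (fun i : ℕ => ((0 : ZMod d), ((2 * i - 1 : ℕ) : ZMod d))) ∪
            ({((0 : ZMod d), (0 : ZMod d)),
              ((((d / 2 : ℕ) : ZMod d)), (0 : ZMod d)),
              ((((d / 2 : ℕ) : ZMod d)), (((d / 2 : ℕ) : ZMod d)))} :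
              Finset (ZMod d × ZMod d))),
        p ≠ q → ip d (pU d p.1 p.2 α) (pU d q.1 q.2 α) = 0) : False := by
  have hd0 : d ≠ 0 := NeZero.ne d
  set ζ := ω d with hζdef
  have hζ : IsPrimitiveRoot ζ d := Complex.isPrimitiveRoot_exp d hd0
  have hζ0 : ζ ≠ 0 := hζ.ne_zero hd0
  have hζd : ζ ^ d = 1 := hζ.pow_eq_one
  have hconj : (starRingEnd ℂ) ζ = ζ⁻¹ := by
    rw [hζdef]
    unfold ω
    rw [← Complex.exp_conj, ← Complex.exp_neg]
    congr 1
    simp [map_div₀, Complex.conj_I, Complex.conj_ofReal, map_ofNat]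
    ring
  have hconjzpow : ∀ t : ℤ, (starRingEnd ℂ) (ζ ^ t) = ζ ^ (-t) := fun t => by
    rw [map_zpow₀, hconj, inv_zpow, ← zpow_neg]
  have hconjpow : ∀ t : ℕ, (starRingEnd ℂ) (ζ ^ t) = ζ ^ (-(t : ℤ)) := fun t => by
    rw [← zpow_natCast ζ t, hconjzpow]
  have hd2 : d / 2 = 2 * m + 1 := by omega
  set s' : ZMod d := ((d / 2 : ℕ) : ZMod d) with hs'def
  have hvn : ∀ a : ℕ, a < d → ((a : ZMod d)).val = a := fun a h => ZMod.val_natCast_of_lt h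
  have hs'val : s'.val = 2 * m + 1 := by rw [hs'def, hd2]; exact hvn _ (by omega)
  have hs'ne : s' ≠ 0 := by
    intro h
    apply_fun ZMod.val at h
    rw [hs'val, ZMod.val_zero] at h
    omega
  have hs_zmod : 2 * (m : ZMod d) + 1 = s' := by
    rw [hs'def, hd2]; push_cast; ring
  have hs2 : s' + s' = 0 := by
    rw [hs'def, hd2]
    have e1 : ((2 * m + 1 : ℕ) : ZMod d) + ((2 * m + 1 : ℕ) : ZMod d) = ((4 * m + 2 : ℕ) : ZMod d) := by
      push_cast; ring
    rw [e1, ← hd, ZMod.natCast_self]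
  -- membership
  have hmemB : ∀ b : ℕ, (b = 0 ∨ (b % 2 = 1 ∧ b ≤ 2 * m + 1)) →
      ((0 : ZMod d), (b : ZMod d)) ∈ ((Finset.Icc 1 (m+1)).image
              (fun i : ℕ => ((0 : ZMod d), ((2 * i - 1 : ℕ) : ZMod d))) ∪
            ({((0 : ZMod d), (0 : ZMod d)),
              ((((d / 2 : ℕ) : ZMod d)), (0 : ZMod d)),
              ((((d / 2 : ℕ) : ZMod d)), (((d / 2 : ℕ) : ZMod d)))} :
              Finset (ZMod d × ZMod d))) := by
    intro b hb
    rcases hb with hb | ⟨hb1, hb2⟩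
    · subst hb
      apply Finset.mem_union_right
      simp
    · apply Finset.mem_union_left
      rw [Finset.mem_image]
      refine ⟨(b + 1) / 2, Finset.mem_Icc.mpr ⟨by omega, by omega⟩, ?_⟩
      rw [show 2 * ((b + 1) / 2) - 1 = b by omega]
  have hmemS0 : ((s' : ZMod d), (0 : ZMod d)) ∈ ((Finset.Icc 1 (m+1)).image
              (fun i : ℕ => ((0 : ZMod d), ((2 * i - 1 : ℕ) : ZMod d))) ∪
            ({((0 : ZMod d), (0 : ZMod d)),
              ((((d / 2 : ℕ) : ZMod d)), (0 : ZMod d)),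
              ((((d / 2 : ℕ) : ZMod d)), (((d / 2 : ℕ) : ZMod d)))} :
              Finset (ZMod d × ZMod d))) := by
    apply Finset.mem_union_right
    simp [hs'def]
  have hmemSS : ((s' : ZMod d), (s' : ZMod d)) ∈ ((Finset.Icc 1 (m+1)).image
              (fun i : ℕ => ((0 : ZMod d), ((2 * i - 1 : ℕ) : ZMod d))) ∪
            ({((0 : ZMod d), (0 : ZMod d)),
              ((((d / 2 : ℕ) : ZMod d)), (0 : ZMod d)),
              ((((d / 2 : ℕ) : ZMod d)), (((d / 2 : ℕ) : ZMod d)))} :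
              Finset (ZMod d × ZMod d))) := by
    apply Finset.mem_union_right
    simp [hs'def]
  -- master ip formula
  have hip : ∀ (a b a' b' : ZMod d),
      ip d (pU d a b α) (pU d a' b' α)
        = ∑ k : ZMod d, ζ ^ (-((b.val : ℤ) * ((k - a).val : ℤ)) + (b'.val : ℤ) * ((k - a').val : ℤ))
            * ((starRingEnd ℂ) (α (k - a)) * α (k - a')) := by
    intro a b a' b'
    unfold ip pU
    refine Finset.sum_congr rfl fun k _ => ?_
    rw [← hζdef, map_mul, hconjpow, ← zpow_natCast ζ (b'.val * (k - a').val), zpow_add₀ hζ0]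
    push_cast
    ring
  set β : ZMod d → ℂ := fun k => (starRingEnd ℂ) (α k) * α k with hβdef
  have hne2 : ∀ x y : ZMod d, ((0 : ZMod d), x) ≠ (s', y) := by
    intro x y h
    exact hs'ne (congrArg Prod.fst h).symm
  have hT1 : ∀ b b' : ℕ, (b = 0 ∨ (b % 2 = 1 ∧ b ≤ 2*m+1)) → (b' = 0 ∨ (b' % 2 = 1 ∧ b' ≤ 2*m+1)) →
      b ≠ b' → ∑ k : ZMod d, ζ ^ (((b' : ℤ) - (b : ℤ)) * (k.val : ℤ)) * β k = 0 := by
    intro b b' hb hb' hbb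
    have hbd : b < d := by omega
    have hb'd : b' < d := by omega
    have hne : ((0 : ZMod d), (b : ZMod d)) ≠ ((0 : ZMod d), (b' : ZMod d)) := by
      intro h
      have h2 := congrArg (fun p : ZMod d × ZMod d => p.2.val) h
      simp only at h2
      rw [hvn b hbd, hvn b' hb'd] at h2
      exact hbb h2
    have h := horth _ (hmemB b hb) _ (hmemB b' hb') hne
    rw [hip] at h
    simp only [sub_zero] at h
    rw [sum_exp_congr hζ0 hζd β
      (fun k => ((b' : ℤ) - (b : ℤ)) * (k.val : ℤ))
      (fun k => -((((b : ZMod d)).val : ℤ) * (k.val : ℤ)) + (((b' : ZMod d)).val : ℤ) * (k.val : ℤ))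
      (fun k => by rw [hvn b hbd, hvn b' hb'd]; push_cast; ring)]
    exact h
  have hF : ∀ j : ℕ, 0 < j → j < d → ∑ k : ZMod d, ζ ^ ((j : ℤ) * (k.val : ℤ)) * β k = 0 := by
    intro j hj0 hjd
    obtain ⟨b, b', hb, hb', hbb, hcast⟩ :
        ∃ b b' : ℕ, (b = 0 ∨ (b % 2 = 1 ∧ b ≤ 2*m+1)) ∧ (b' = 0 ∨ (b' % 2 = 1 ∧ b' ≤ 2*m+1)) ∧
          b ≠ b' ∧ (((j : ℤ) : ZMod d)) = ((((b' : ℤ) - (b : ℤ)) : ℤ) : ZMod d) := by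
      rcases Nat.even_or_odd j with he | ho
      · have hj2 : j % 2 = 0 := Nat.even_iff.mp he
        by_cases hle : j ≤ 2 * m
        · refine ⟨1, j + 1, Or.inr ⟨by omega, by omega⟩, Or.inr ⟨by omega, by omega⟩, by omega, ?_⟩
          push_cast; ring
        · refine ⟨d - j + 1, 1, Or.inr ⟨by omega, by omega⟩, Or.inr ⟨by omega, by omega⟩,
            by omega, ?_⟩
          push_cast [Nat.cast_sub hjd.le]
          rw [ZMod.natCast_self]
          ring
      · have hj2 : j % 2 = 1 := Nat.odd_iff.mp ho
        by_cases hle : j ≤ 2 * m + 1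
        · refine ⟨0, j, Or.inl rfl, Or.inr ⟨hj2, hle⟩, by omega, ?_⟩
          push_cast; ring
        · refine ⟨d - j, 0, Or.inr ⟨by omega, by omega⟩, Or.inl rfl, by omega, ?_⟩
          push_cast [Nat.cast_sub hjd.le]
          rw [ZMod.natCast_self]
          ring
    rw [sum_exp_congr hζ0 hζd β
      (fun k => (j : ℤ) * (k.val : ℤ))
      (fun k => ((b' : ℤ) - (b : ℤ)) * (k.val : ℤ))
      (fun k => by
        push_cast [valcast] at hcast ⊢
        rw [hcast])]
    exact hT1 b b' hb hb' hbb
  have hβ : ∀ k0 : ZMod d, β k0 = (d : ℂ)⁻¹ := by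
    intro k0
    have hinv := fourier_inv hζ β k0
    rw [Finset.sum_eq_single_of_mem 0 (Finset.mem_range.mpr (by omega))
      (fun j hjmem hj0 => by
        rw [hF j (Nat.pos_of_ne_zero hj0) (Finset.mem_range.mp hjmem), zero_mul])] at hinv
    simp only [Nat.cast_zero, zero_mul, neg_zero, zpow_zero, one_mul, mul_one] at hinv
    have hsum : ∑ k : ZMod d, β k = 1 := h1
    rw [hsum] at hinv
    have hdc : (d : ℂ) ≠ 0 := Nat.cast_ne_zero.mpr hd0
    field_simp
    linear_combination -hinv
  have hαne : ∀ k : ZMod d, α k ≠ 0 := by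
    intro k hk
    have h := hβ k
    rw [hβdef] at h
    simp only [hk, mul_zero] at h
    exact (inv_ne_zero (Nat.cast_ne_zero.mpr hd0)) h.symm
  set c : ZMod d → ℂ := fun k => (starRingEnd ℂ) (α k) * α (k - s') with hcdef
  have hcsym : ∀ k : ZMod d, (starRingEnd ℂ) (c k) = c (k - s') := by
    intro k
    rw [hcdef]
    simp only [map_mul, Complex.conj_conj]
    rw [sub_sub, hs2, sub_zero]
    ring
  have hT2 : ∀ b : ℕ, (b = 0 ∨ (b % 2 = 1 ∧ b ≤ 2*m+1)) →
      ∑ k : ZMod d, ζ ^ ((-(b : ℤ)) * (k.val : ℤ)) * c k = 0 := by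
    intro b hb
    have hbd : b < d := by omega
    have h := horth _ (hmemB b hb) _ hmemS0 (hne2 _ _)
    rw [hip] at h
    simp only [sub_zero, ZMod.val_zero, Nat.cast_zero, zero_mul, add_zero] at h
    rw [sum_exp_congr hζ0 hζd c
      (fun k => (-(b : ℤ)) * (k.val : ℤ))
      (fun k => -((((b : ZMod d)).val : ℤ) * (k.val : ℤ)))
      (fun k => by rw [hvn b hbd]; push_cast; ring)]
    exact h
  have hT3 : ∀ b : ℕ, (b = 0 ∨ (b % 2 = 1 ∧ b ≤ 2*m+1)) →
      ∑ k : ZMod d, ζ ^ (((2*m+1 : ℤ) - (b : ℤ)) * (k.val : ℤ)) * c k = 0 := by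
    intro b hb
    have hbd : b < d := by omega
    have h := horth _ (hmemB b hb) _ hmemSS (hne2 _ _)
    rw [hip] at h
    simp only [sub_zero] at h
    apply sum_shift hζ0 c (fun k => ((2*m+1 : ℤ) - (b : ℤ)) * (k.val : ℤ))
      (-((2*m+1 : ℤ) * (2*m+1)))
    rw [sum_exp_congr hζ0 hζd c
      (fun k => ((2*m+1 : ℤ) - (b : ℤ)) * (k.val : ℤ) + -((2*m+1 : ℤ) * (2*m+1)))
      (fun k => -((((b : ZMod d)).val : ℤ) * (k.val : ℤ)) + ((s'.val : ℤ) * (((k - s').val : ℤ))))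
      (fun k => by
        rw [hvn b hbd]
        push_cast [valcast]
        linear_combination (k - s' - (2*(m : ZMod d)+1)) * hs_zmod)]
    exact h
  have hGsym : ∀ t : ℤ, (∑ k : ZMod d, ζ ^ (t * (k.val : ℤ)) * c k = 0) →
      ∑ k : ZMod d, ζ ^ ((-t) * (k.val : ℤ)) * c k = 0 := by
    intro t h
    have h' := congrArg (starRingEnd ℂ) h
    rw [map_sum, map_zero] at h'
    have hterm : ∀ k : ZMod d, (starRingEnd ℂ) (ζ ^ (t * (k.val : ℤ)) * c k)
        = ζ ^ ((-t) * (k.val : ℤ)) * c (k - s') := by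
      intro k
      rw [map_mul, hconjzpow, hcsym, neg_mul]
    rw [Finset.sum_congr rfl fun k _ => hterm k] at h'
    have hre : ∑ k : ZMod d, ζ ^ ((-t) * (k.val : ℤ)) * c (k - s')
        = ∑ k : ZMod d, ζ ^ ((-t) * (((k + s').val : ℕ) : ℤ)) * c k := by
      refine (Fintype.sum_equiv (Equiv.addRight s') _ _ ?_).symm
      intro k
      simp only [Equiv.coe_addRight, add_sub_cancel_right]
    rw [hre] at h'
    rw [sum_exp_congr hζ0 hζd c
      (fun k => (-t) * (((k + s').val : ℕ) : ℤ))
      (fun k => (-t) * ((k.val : ℕ) : ℤ) + (-t) * (2*m+1 : ℤ))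
      (fun k => by push_cast [valcast]; linear_combination ((t : ZMod d)) * hs_zmod)] at h'
    exact sum_shift hζ0 c _ _ h'
  have hGper : ∀ t t' : ℤ, ((t : ZMod d) = (t' : ZMod d)) →
      (∑ k : ZMod d, ζ ^ (t * (k.val : ℤ)) * c k = 0) →
      ∑ k : ZMod d, ζ ^ (t' * (k.val : ℤ)) * c k = 0 := by
    intro t t' htt h
    rw [sum_exp_congr hζ0 hζd c (fun k => t' * (k.val : ℤ)) (fun k => t * (k.val : ℤ))
      (fun k => by push_cast [valcast]; rw [htt])]
    exact h
  have hGsmall : ∀ j : ℕ, j % 2 = 0 → j ≤ 2*m →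
      ∑ k : ZMod d, ζ ^ ((j : ℤ) * (k.val : ℤ)) * c k = 0 := by
    intro j hj2 hjle
    have h := hT3 (2*m+1-j) (Or.inr ⟨by omega, by omega⟩)
    have e : (2*m+1 : ℤ) - ((2*m+1-j : ℕ) : ℤ) = (j : ℤ) := by omega
    rw [e] at h
    exact h
  have hG : ∀ j : ℕ, j < d → ∑ k : ZMod d, ζ ^ ((j : ℤ) * (k.val : ℤ)) * c k = 0 := by
    intro j hjd
    rcases Nat.even_or_odd j with he | ho
    · have hj2 : j % 2 = 0 := Nat.even_iff.mp he
      by_cases hle : j ≤ 2*m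
      · exact hGsmall j hj2 hle
      · have h0 := hGsmall (d - j) (by omega) (by omega)
        have h1 := hGsym _ h0
        refine hGper _ _ ?_ h1
        push_cast [Nat.cast_sub hjd.le]
        rw [ZMod.natCast_self]
        ring
    · have hj2 : j % 2 = 1 := Nat.odd_iff.mp ho
      by_cases hle : j ≤ 2*m+1
      · have h0 := hT2 j (Or.inr ⟨hj2, hle⟩)
        have h1 := hGsym _ h0
        rw [neg_neg] at h1
        exact h1
      · have h0 := hT2 (d - j) (Or.inr ⟨by omega, by omega⟩)
        refine hGper _ _ ?_ h0
        push_cast [Nat.cast_sub hjd.le]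
        rw [ZMod.natCast_self]
        ring
  have hfin := fourier_inv hζ c 0
  rw [Finset.sum_eq_zero (fun j hj => by
    rw [hG j (Finset.mem_range.mp hj), zero_mul])] at hfin
  have hc0 : c 0 ≠ 0 := by
    rw [hcdef]
    simp only
    refine mul_ne_zero ?_ (hαne _)
    simpa using hαne 0
  exact (mul_ne_zero (Nat.cast_ne_zero.mpr hd0) hc0) hfin.symm

/-- (Theorem 4(2) of the paper.) For `d = 4m + 2` (`m ≥ 1`), the set
`S = {(0, 2i-1) : i = 1,…,⌈d/4⌉} ∪ {(0,0), (d/2,0), (d/2, d/2)}` of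
`3 + ⌈d/4⌉` generalized Bell states is 1-LOCC indistinguishable: there is no
unit vector `α ∈ ℂ^d` for which the vectors `X^a Z^b α`, `(a,b) ∈ S`, are
pairwise orthogonal. Hence `f_GBS(d) ≤ 3 + ⌈d/4⌉`. -/
theorem stmt_16 (m : ℕ) (hm : 1 ≤ m) (d : ℕ) [NeZero d] (hd : d = 4 * m + 2) :
    ∃ S : Finset (ZMod d × ZMod d),
      S = (Finset.Icc 1 ⌈(d : ℚ) / 4⌉₊).image
              (fun i : ℕ => ((0 : ZMod d), ((2 * i - 1 : ℕ) : ZMod d))) ∪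
            ({((0 : ZMod d), (0 : ZMod d)),
              ((((d / 2 : ℕ) : ZMod d)), (0 : ZMod d)),
              ((((d / 2 : ℕ) : ZMod d)), (((d / 2 : ℕ) : ZMod d)))} :
              Finset (ZMod d × ZMod d)) ∧
      S.card = 3 + ⌈(d : ℚ) / 4⌉₊ ∧
      ¬ ∃ α : ZMod d → ℂ, ip d α α = 1 ∧
        ∀ p ∈ S, ∀ q ∈ S, p ≠ q → ip d (pU d p.1 p.2 α) (pU d q.1 q.2 α) = 0 := by
  have hceil : ⌈(d : ℚ) / 4⌉₊ = m + 1 := by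
    subst hd
    rw [Nat.ceil_eq_iff (by omega)]
    push_cast
    constructor <;> [linarith; linarith]
  refine ⟨_, rfl, ?_, ?_⟩
  · -- cardinality
    have hd2 : d / 2 = 2 * m + 1 := by omega
    have hvn : ∀ a : ℕ, a < d → ((a : ZMod d)).val = a := fun a h => ZMod.val_natCast_of_lt h
    have hsne : (((d / 2 : ℕ) : ZMod d)) ≠ 0 := by
      intro h
      apply_fun ZMod.val at h
      rw [hvn (d/2) (by omega), ZMod.val_zero] at h
      omega
    have hinj : Set.InjOn (fun i : ℕ => ((0 : ZMod d), ((2 * i - 1 : ℕ) : ZMod d)))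
        (Finset.Icc 1 ⌈(d : ℚ) / 4⌉₊) := by
      rw [hceil]
      intro i hi j hj h
      simp only [Finset.coe_Icc, Set.mem_Icc] at hi hj
      have h2 := congrArg Prod.snd h
      simp only at h2
      apply_fun ZMod.val at h2
      rw [hvn _ (by omega), hvn _ (by omega)] at h2
      omega
    have hnotmem : ∀ p ∈ ({((0 : ZMod d), (0 : ZMod d)),
                ((((d / 2 : ℕ) : ZMod d)), (0 : ZMod d)),
                ((((d / 2 : ℕ) : ZMod d)), (((d / 2 : ℕ) : ZMod d)))} :
                Finset (ZMod d × ZMod d)),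
        p ∉ (Finset.Icc 1 ⌈(d : ℚ) / 4⌉₊).image
                (fun i : ℕ => ((0 : ZMod d), ((2 * i - 1 : ℕ) : ZMod d))) := by
      intro p hp hmem
      rw [Finset.mem_image] at hmem
      obtain ⟨i, hi, hpi⟩ := hmem
      rw [hceil, Finset.mem_Icc] at hi
      simp only [Finset.mem_insert, Finset.mem_singleton] at hp
      rcases hp with hp | hp | hp
      · rw [hp] at hpi
        have h2 := congrArg Prod.snd hpi
        simp only at h2
        apply_fun ZMod.val at h2
        rw [hvn _ (by omega), ZMod.val_zero] at h2
        omega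
      · rw [hp] at hpi
        have h2 := congrArg Prod.fst hpi
        simp only at h2
        exact hsne h2.symm
      · rw [hp] at hpi
        have h2 := congrArg Prod.fst hpi
        simp only at h2
        exact hsne h2.symm
    rw [Finset.union_comm, Finset.card_union_of_disjoint, Finset.card_image_of_injOn hinj]
    · have h3 : (({((0 : ZMod d), (0 : ZMod d)),
                ((((d / 2 : ℕ) : ZMod d)), (0 : ZMod d)),
                ((((d / 2 : ℕ) : ZMod d)), (((d / 2 : ℕ) : ZMod d)))} :
                Finset (ZMod d × ZMod d))).card = 3 := by
        rw [Finset.card_insert_of_notMem, Finset.card_insert_of_notMem, Finset.card_singleton]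
        · simp only [Finset.mem_singleton]
          intro h
          have h2 := congrArg Prod.snd h
          simp only at h2
          exact hsne h2.symm
        · simp only [Finset.mem_insert, Finset.mem_singleton]
          push_neg
          constructor <;>
            (intro h; have h2 := congrArg Prod.fst h; simp only at h2; exact hsne h2.symm)
      rw [h3, Nat.card_Icc, hceil]
      omega
    · rw [Finset.disjoint_left]
      exact hnotmem
  · rw [hceil]
    rintro ⟨α, h1, horth⟩
    exact main_contra m hm d hd α h1 horth
end
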